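/- For all integers k ≥ 2 and 1 ≤ a ≤ k, one has (a+1) · Σ_{1 ≤ i < j ≤ k} C(k-(j-i)-1, a-1) = k·(k-a)·C(k-1, a-1), where C denotes the binomial coefficient. Equivalently, the probability that two uniformly chosen distinct elements of {1,...,k} lie in the same part of a uniformly random composition of k into a (positive) parts equals (2/(a+1))·(k-a)/(k-1). -/

import Mathlib

open Finset

lemma pair_sum_eq (k a : ℕ) :
    ∑ p ∈ (Finset.Icc 1 k ×ˢ Finset.Icc 1 k).filter (fun p => p.1 < p.2),
        Nat.choose (k - (p.2 - p.1) - 1) (a - 1)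
      = ∑ d ∈ Icc 1 (k-1), (k - d) * Nat.choose (k - d - 1) (a - 1) := by
  have : ∑ d ∈ Icc 1 (k-1), (k - d) * Nat.choose (k - d - 1) (a - 1)
      = ∑ x ∈ (Icc 1 (k-1)).sigma (fun d => Icc 1 (k - d)),
          Nat.choose (k - x.1 - 1) (a - 1) := by
    rw [Finset.sum_sigma]
    refine Finset.sum_congr rfl fun d hd => ?_
    simp only [Finset.sum_const, Nat.card_Icc, smul_eq_mul]
    congr 1 <;> omega
  rw [this]
  refine Finset.sum_nbij' (fun p => ⟨p.2 - p.1, p.1⟩) (fun x => (x.2, x.2 + x.1)) ?_ ?_ ?_ ?_ ?_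
  · intro p hp
    simp only [Finset.mem_filter, Finset.mem_product, Finset.mem_Icc] at hp
    obtain ⟨⟨⟨h1, h2⟩, h3, h4⟩, h5⟩ := hp
    simp only [Finset.mem_sigma, Finset.mem_Icc]
    omega
  · intro x hx
    simp only [Finset.mem_sigma, Finset.mem_Icc] at hx
    simp only [Finset.mem_filter, Finset.mem_product, Finset.mem_Icc]
    omega
  · intro p hp
    simp only [Finset.mem_filter, Finset.mem_product, Finset.mem_Icc] at hp
    rw [Prod.ext_iff]
    constructor
    · rfl
    · simp; omega
  · intro x hx
    obtain ⟨d, i⟩ := x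
    simp only [Finset.mem_sigma, Finset.mem_Icc] at hx
    have h : i + d - i = d := by omega
    simp [h]
  · intro p hp; rfl

/-- For all integers `k ≥ 2` and `1 ≤ a ≤ k`,
`(a+1) · Σ_{1 ≤ i < j ≤ k} C(k-(j-i)-1, a-1) = k·(k-a)·C(k-1, a-1)`. -/
theorem stmt0 (k a : ℕ) (hk : 2 ≤ k) (ha1 : 1 ≤ a) (hak : a ≤ k) :
    (a + 1) *
      ∑ p ∈ (Finset.Icc 1 k ×ˢ Finset.Icc 1 k).filter (fun p => p.1 < p.2),
        Nat.choose (k - (p.2 - p.1) - 1) (a - 1)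
      = k * (k - a) * Nat.choose (k - 1) (a - 1) := by
  rw [pair_sum_eq]
  -- reflect: d ↦ k - d
  have hrefl : ∑ d ∈ Icc 1 (k-1), (k - d) * Nat.choose (k - d - 1) (a - 1)
      = ∑ m ∈ Icc 1 (k-1), m * Nat.choose (m - 1) (a - 1) := by
    refine Finset.sum_nbij' (fun d => k - d) (fun m => k - m) ?_ ?_ ?_ ?_ ?_
    · intro d hd; simp only [Finset.mem_Icc] at hd ⊢; omega
    · intro m hm; simp only [Finset.mem_Icc] at hm ⊢; omega
    · intro d hd; simp only [Finset.mem_Icc] at hd; omega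
    · intro m hm; simp only [Finset.mem_Icc] at hm; omega
    · intro d hd; simp only [Finset.mem_Icc] at hd
      congr 1 <;> omega
  rw [hrefl]
  have hpt : ∀ m ∈ Icc 1 (k-1), m * Nat.choose (m - 1) (a - 1)
      = Nat.choose m a * a := by
    intro m hm
    simp only [Finset.mem_Icc] at hm
    have h := Nat.add_one_mul_choose_eq (m - 1) (a - 1)
    simpa only [Nat.succ_eq_add_one, Nat.sub_add_cancel hm.1, Nat.sub_add_cancel ha1] using h
  rw [Finset.sum_congr rfl hpt, ← Finset.sum_mul]
  have hsum : ∑ m ∈ Icc 1 (k-1), Nat.choose m a = Nat.choose k (a + 1) := by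
    have h0 : ∀ m ∈ Icc 1 (k-1), m ∉ Icc a (k-1) → Nat.choose m a = 0 := by
      intro m hm hm'
      simp only [Finset.mem_Icc] at hm hm'
      exact Nat.choose_eq_zero_of_lt (by omega)
    rcases le_or_gt a (k - 1) with h | h
    · rw [← Finset.sum_subset (Finset.Icc_subset_Icc_left ha1) h0,
        Nat.sum_Icc_choose, Nat.sub_add_cancel (by omega)]
    · have : a = k := by omega
      subst this
      rw [Nat.choose_eq_zero_of_lt (by omega)]
      refine Finset.sum_eq_zero fun m hm => ?_
      simp only [Finset.mem_Icc] at hm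
      exact Nat.choose_eq_zero_of_lt (by omega)
  rw [hsum]
  -- now: (a+1) * (C(k, a+1) * a) = k * (k-a) * C(k-1, a-1)
  have h1 : k * Nat.choose (k - 1) a = Nat.choose k (a + 1) * (a + 1) := by
    have h := Nat.add_one_mul_choose_eq (k - 1) a
    simpa only [Nat.succ_eq_add_one, Nat.sub_add_cancel (show 1 ≤ k by omega)] using h
  have h2 : Nat.choose (k - 1) a * a = Nat.choose (k - 1) (a - 1) * (k - a) := by
    have := Nat.choose_succ_right_eq (k - 1) (a - 1)
    rw [Nat.sub_add_cancel ha1] at this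
    rw [this]
    congr 1 <;> omega
  calc (a + 1) * (Nat.choose k (a + 1) * a)
      = (Nat.choose k (a + 1) * (a + 1)) * a := by ring
    _ = k * Nat.choose (k - 1) a * a := by rw [h1]
    _ = k * (Nat.choose (k - 1) a * a) := by ring
    _ = k * (Nat.choose (k - 1) (a - 1) * (k - a)) := by rw [h2]
    _ = k * (k - a) * Nat.choose (k - 1) (a - 1) := by ring
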